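/- Suppose there exist i ∈ {1, …, ⌈log₂ n⌉}, j ∈ {0, 1}, k ∈ {1, …, ⌈log₂ ρ⌉}, distinct vertices y, z ∈ V, a shortest path π from y¹ to z² in G_{i,j,k}, and a shortest path σ from y to z in G, such that: (1) w(π) + w(σ) = wt; (2) the predecessor of z² on π, viewed as a vertex of V, is different from the predecessor of z on σ; and (3) w(π) ≤ w(σ) + M/2^{k−1}. Then G contains a simple cycle through z of weight at most wt. -/

import Mathlib

namespace Stmt3

/-- The weight of a walk: the sum of the weights of its edges. -/
def walkWt {α : Type*} {H : SimpleGraph α} (w : Sym2 α → ℕ) {x y : α} (p : H.Walk x y) : ℕ :=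
  (p.edges.map w).sum

/-- Weighted shortest-path distance (`0` if there is no path). -/
noncomputable def wdist {α : Type*} (H : SimpleGraph α) (w : Sym2 α → ℕ) (x y : α) : ℕ :=
  sInf {d : ℕ | ∃ p : H.Walk x y, p.IsPath ∧ walkWt w p = d}

/-- A shortest path in a weighted graph: a path of minimum weight. -/
def IsShortestPathW {α : Type*} {H : SimpleGraph α} (w : Sym2 α → ℕ) {x y : α}
    (p : H.Walk x y) : Prop :=
  p.IsPath ∧ ∀ q : H.Walk x y, q.IsPath → walkWt w p ≤ walkWt w q

/-- The penultimate vertex of a walk (the predecessor of the final endpoint). -/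
def penult {α : Type*} {H : SimpleGraph α} {x y : α} (p : H.Walk x y) : α :=
  p.getVert (p.length - 1)

/-- The weight function on `V¹ ⊕ V²` induced by `w` (each copy of a vertex is identified
with the original vertex). -/
def liftW {V : Type*} (w : Sym2 V → ℕ) : Sym2 (V ⊕ V) → ℕ :=
  fun e => w (e.map (Sum.elim id id))

/-- The bit-sampling graph `G_{i,j,k}` on two copies `V¹ ⊕ V²` of `V`:
`u¹ ∼ v¹` iff `u ∼ v` in `G`; `u¹ ∼ v²` iff `u ∼ v` in `G`, the `i`-th bit of `u`'s label
equals `j`, and `w(u,v) > M/2ᵏ`; no edges inside `V²`. -/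
def GIJK {V : Type*} (G : SimpleGraph V) (w : Sym2 V → ℕ) (M : ℕ) (label : V → ℕ)
    (i : ℕ) (j : Bool) (k : ℕ) : SimpleGraph (V ⊕ V) where
  Adj a b := match a, b with
    | Sum.inl u, Sum.inl v => G.Adj u v
    | Sum.inl u, Sum.inr v =>
        G.Adj u v ∧ (label u).testBit (i - 1) = j ∧ (M : ℝ) / 2 ^ k < (w s(u, v) : ℝ)
    | Sum.inr v, Sum.inl u =>
        G.Adj u v ∧ (label u).testBit (i - 1) = j ∧ (M : ℝ) / 2 ^ k < (w s(u, v) : ℝ)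
    | Sum.inr _, Sum.inr _ => False
  symm := by
    constructor
    rintro (u | u) (v | v) h
    · exact h.symm
    · exact h
    · exact h
    · exact h.elim
  loopless := by
    constructor
    rintro (u | u) h
    · exact G.irrefl h
    · exact h

/-- `d_C` between the base vertex of the closed walk `C` and its `t`-th vertex: the minimum
of the weights of the two arcs of `C` between them. -/
def dCyc {V : Type*} {G : SimpleGraph V} (w : Sym2 V → ℕ) {u : V} (C : G.Walk u u)
    (t : ℕ) : ℕ :=
  min (((C.edges.take t).map w).sum) (walkWt w C - ((C.edges.take t).map w).sum)

lemma getVert_mem_support {V : Type*} {G : SimpleGraph V} {u v : V} (p : G.Walk u v)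
    (i : ℕ) : p.getVert i ∈ p.support := by
  induction p generalizing i with
  | nil => cases i <;> simp [SimpleGraph.Walk.getVert]
  | cons h q ih =>
    cases i with
    | zero => simp
    | succ n =>
      rw [SimpleGraph.Walk.getVert_cons_succ]
      simp [ih n]

section Aux
variable {α : Type*} {H : SimpleGraph α}

lemma walkWt_cons (w : Sym2 α → ℕ) {x y z : α} (h : H.Adj x y) (p : H.Walk y z) :
    walkWt w (SimpleGraph.Walk.cons h p) = w s(x, y) + walkWt w p := by
  simp [walkWt]

lemma walkWt_append (w : Sym2 α → ℕ) {x y z : α} (p : H.Walk x y) (q : H.Walk y z) :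
    walkWt w (p.append q) = walkWt w p + walkWt w q := by
  simp [walkWt, SimpleGraph.Walk.edges_append]

lemma walkWt_concat (w : Sym2 α → ℕ) {x y z : α} (p : H.Walk x y) (h : H.Adj y z) :
    walkWt w (p.concat h) = walkWt w p + w s(y, z) := by
  simp [walkWt, SimpleGraph.Walk.edges_concat]

lemma walkWt_reverse (w : Sym2 α → ℕ) {x y : α} (p : H.Walk x y) :
    walkWt w p.reverse = walkWt w p := by
  simp [walkWt, SimpleGraph.Walk.edges_reverse, List.map_reverse, List.sum_reverse]

lemma walkWt_bypass_le [DecidableEq α] (w : Sym2 α → ℕ) {x y : α} (p : H.Walk x y) :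
    walkWt w p.bypass ≤ walkWt w p := by
  obtain ⟨l, hperm, hsl⟩ :=
    (p.bypass_isPath.isTrail.edges_nodup).subperm p.edges_bypass_subset
  calc walkWt w p.bypass = (l.map w).sum := ((hperm.map w).sum_eq).symm
    _ ≤ (p.edges.map w).sum := (hsl.map w).sum_le_sum (fun a _ => Nat.zero_le a)
    _ = walkWt w p := rfl

lemma shortest_le [DecidableEq α] (w : Sym2 α → ℕ) {x y : α} {σ : H.Walk x y}
    (hσ : IsShortestPathW w σ) (W : H.Walk x y) : walkWt w σ ≤ walkWt w W :=
  (hσ.2 W.bypass W.bypass_isPath).trans (walkWt_bypass_le w W)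

lemma getVert_concat_len {x v z : α} (Q : H.Walk x v) (h : H.Adj v z) :
    (Q.concat h).getVert Q.length = v := by
  rw [SimpleGraph.Walk.concat_eq_append, SimpleGraph.Walk.getVert_append]
  simp

lemma penult_concat {x v z : α} (Q : H.Walk x v) (h : H.Adj v z) :
    penult (Q.concat h) = v := by
  unfold penult
  rw [SimpleGraph.Walk.length_concat, Nat.add_sub_cancel]
  exact getVert_concat_len Q h

lemma exists_concat {x y : α} (p : H.Walk x y) (hne : x ≠ y) :
    ∃ (c : α) (Q : H.Walk x c) (h : H.Adj c y), p = Q.concat h := by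
  have h1 : ¬ p.reverse.Nil := SimpleGraph.Walk.not_nil_of_ne (Ne.symm hne)
  obtain ⟨c, hadj, Q, hQ⟩ := SimpleGraph.Walk.not_nil_iff.mp h1
  refine ⟨c, Q.reverse, hadj.symm, ?_⟩
  have h2 := congrArg SimpleGraph.Walk.reverse hQ
  rw [SimpleGraph.Walk.reverse_reverse, SimpleGraph.Walk.reverse_cons] at h2
  rw [h2, SimpleGraph.Walk.concat_eq_append]

lemma cycle_aux [DecidableEq α] (w : Sym2 α → ℕ) {z a c : α}
    (ha : H.Adj z a) (hc : H.Adj c z) (P : H.Walk a c) (hzP : z ∉ P.support) (hac : a ≠ c) :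
    ∃ D : H.Walk z z, D.IsCycle ∧ walkWt w D ≤ w s(z, a) + walkWt w P + w s(c, z) := by
  set B := P.bypass with hB
  have hBp : B.IsPath := P.bypass_isPath
  have hzB : z ∉ B.support := fun h => hzP (P.support_bypass_subset h)
  refine ⟨SimpleGraph.Walk.cons ha (B.append (SimpleGraph.Walk.cons hc SimpleGraph.Walk.nil)),
    ?_, ?_⟩
  · have e1 : s(z, a) ∉ B.edges := fun h => hzB (B.fst_mem_support_of_mem_edges h)
    have e2 : s(c, z) ∉ B.edges := fun h => hzB (B.snd_mem_support_of_mem_edges h)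
    have e3 : s(z, a) ≠ s(c, z) := by
      intro h
      rcases Sym2.eq_iff.mp h with ⟨rfl, rfl⟩ | ⟨-, rfl⟩
      · exact hc.ne rfl
      · exact hac rfl
    constructor
    · constructor
      · constructor
        simp only [SimpleGraph.Walk.edges_cons, SimpleGraph.Walk.edges_append,
          SimpleGraph.Walk.edges_nil, List.nodup_cons, List.nodup_append', List.mem_append,
          List.append_nil, List.mem_cons, List.not_mem_nil, or_false, List.mem_singleton]
        refine ⟨?_, hBp.isTrail.edges_nodup, ⟨not_false, List.nodup_nil⟩, ?_⟩
        · rintro (h | h)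
          · exact e1 h
          · exact e3 h
        · intro e he hv
          rw [List.mem_singleton] at hv
          subst hv
          exact e2 he
      · exact fun h => by cases h
    · simp only [SimpleGraph.Walk.support_cons, List.tail_cons,
        SimpleGraph.Walk.support_append, SimpleGraph.Walk.support_cons,
        SimpleGraph.Walk.support_nil, List.tail_cons]
      rw [List.nodup_append']
      refine ⟨hBp.support_nodup, List.nodup_singleton _, ?_⟩
      intro u hu hv
      rw [List.mem_singleton] at hv
      subst hv
      exact hzB hu
  · rw [walkWt_cons, walkWt_append, walkWt_cons]
    have h1 : walkWt w B ≤ walkWt w P := walkWt_bypass_le w P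
    have h2 : walkWt w (SimpleGraph.Walk.nil : H.Walk z z) = 0 := rfl
    omega

end Aux

/-- `G` with positive integer weights (largest `M`, smallest `mh`,
`ρ = M/mh`; vertices labeled injectively by `{0, …, n-1}`).  Suppose there are
`i ∈ {1, …, ⌈log₂ n⌉}`, `j ∈ {0,1}`, `k ∈ {1, …, ⌈log₂ ρ⌉}`, distinct vertices `y, z`, a
shortest path `π` from `y¹` to `z²` in `G_{i,j,k}` and a shortest path `σ` from `y` to `z`
in `G` such that: (1) `w(π) + w(σ) = wt`; (2) the predecessor of `z²` on `π` (viewed in `V`)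
differs from the predecessor of `z` on `σ`; (3) `w(π) ≤ w(σ) + M/2^(k-1)`.
Then `G` contains a simple cycle through `z` of weight at most `wt`. -/
theorem stmt3 {V : Type*} [Fintype V] [DecidableEq V] (G : SimpleGraph V)
    (w : Sym2 V → ℕ) (hw : ∀ e ∈ G.edgeSet, 0 < w e)
    (label : V → ℕ) (hinj : Function.Injective label)
    (hlab : ∀ v, label v < Fintype.card V)
    (M mh : ℕ)
    (hM : ∀ e ∈ G.edgeSet, w e ≤ M) (hM' : ∃ e ∈ G.edgeSet, w e = M)
    (hm : ∀ e ∈ G.edgeSet, mh ≤ w e) (hm' : ∃ e ∈ G.edgeSet, w e = mh)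
    (i : ℕ) (hi₁ : 1 ≤ i) (hi₂ : i ≤ Nat.clog 2 (Fintype.card V)) (j : Bool)
    (k : ℕ) (hk₁ : 1 ≤ k) (hk₂ : k ≤ ⌈Real.logb 2 ((M : ℝ) / (mh : ℝ))⌉₊)
    (y z : V) (hyz : y ≠ z) (wt : ℕ)
    (π : (GIJK G w M label i j k).Walk (Sum.inl y) (Sum.inr z))
    (hπ : IsShortestPathW (liftW w) π)
    (σ : G.Walk y z) (hσ : IsShortestPathW w σ)
    (h₁ : walkWt (liftW w) π + walkWt w σ = wt)
    (h₂ : Sum.elim id id (penult π) ≠ penult σ)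
    (h₃ : (walkWt (liftW w) π : ℝ) ≤ (walkWt w σ : ℝ) + (M : ℝ) / 2 ^ (k - 1)) :
    ∃ D : G.Walk z z, D.IsCycle ∧ walkWt w D ≤ wt := by
  classical
  obtain ⟨m, rfl⟩ : ∃ m, k = m + 1 := ⟨k - 1, (Nat.succ_pred_eq_of_pos hk₁).symm⟩
  let hom : GIJK G w M label i j (m+1) →g G :=
    ⟨Sum.elim id id, by
      rintro (u|u) (v|v) h
      · exact h
      · exact h.1
      · exact h.1.symm
      · exact h.elim⟩
  have hwmap : ∀ {x y : V ⊕ V} (p : (GIJK G w M label i j (m+1)).Walk x y),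
      walkWt w (p.map hom) = walkWt (liftW w) p := by
    intro x y p
    simp only [walkWt, SimpleGraph.Walk.edges_map, List.map_map]
    rfl
  rcases Classical.em ((Sum.inl z : V ⊕ V) ∈ π.support) with hz | hz
  · -- π passes through z¹
    obtain ⟨π₁, π₂, hπ₂p, hsplit⟩ :
        ∃ (π₁ : (GIJK G w M label i j (m+1)).Walk (Sum.inl y) (Sum.inl z))
          (π₂ : (GIJK G w M label i j (m+1)).Walk (Sum.inl z) (Sum.inr z)),
          π₂.IsPath ∧ walkWt (liftW w) π = walkWt (liftW w) π₁ + walkWt (liftW w) π₂ := by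
      refine ⟨π.takeUntil _ hz, π.dropUntil _ hz, hπ.1.dropUntil hz, ?_⟩
      conv_lhs => rw [← SimpleGraph.Walk.take_spec π hz]
      exact walkWt_append _ _ _
    obtain ⟨bb, Pi2, hcc, hπ₂eq⟩ := exists_concat π₂ (by simp)
    cases bb with
    | inr c => exact (hcc : False).elim
    | inl c =>
      have hGcz : G.Adj c z := hcc.1
      have hwcz : (M : ℝ) / 2 ^ (m+1) < (w s(c, z) : ℝ) := hcc.2.2
      have hnn : ¬ Pi2.Nil := SimpleGraph.Walk.not_nil_of_ne
        (fun h => hGcz.ne' (Sum.inl.inj h))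
      obtain ⟨b, hza, Pi2x, hPieq⟩ := SimpleGraph.Walk.not_nil_iff.mp hnn
      have hsupp : π₂.support = (Sum.inl z :: Pi2x.support) ++ [Sum.inr z] := by
        rw [hπ₂eq, SimpleGraph.Walk.support_concat, hPieq, SimpleGraph.Walk.support_cons]
      have hnd := hπ₂p.support_nodup
      rw [hsupp] at hnd
      rw [List.cons_append, List.nodup_cons, List.nodup_append'] at hnd
      have hinl : Sum.inl z ∉ Pi2x.support :=
        fun h => hnd.1 (List.mem_append.mpr (Or.inl h))
      have hinr : Sum.inr z ∉ Pi2x.support :=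
        fun h => hnd.2.2.2 h (List.mem_singleton_self _)
      have hπ₂w : walkWt (liftW w) π₂ =
          liftW w s(Sum.inl z, b) + walkWt (liftW w) Pi2x + w s(c, z) := by
        rw [hπ₂eq, walkWt_concat, hPieq, walkWt_cons]
        have : liftW w s(Sum.inl c, Sum.inr z) = w s(c, z) := by
          simp [liftW, Sym2.map_pair_eq]
        omega
      -- obtain a ∈ V with f b = a, G.Adj z a, and w-bound in crossing case
      obtain ⟨a, hba, haG⟩ : ∃ a : V, Sum.elim id id b = a ∧ G.Adj z a := by
        cases b with
        | inl a => exact ⟨a, rfl, hza⟩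
        | inr a => exact ⟨a, rfl, hza.1⟩
      have hwb : liftW w s(Sum.inl z, b) = w s(z, a) := by
        cases b with
        | inl a' => cases hba; simp [liftW, Sym2.map_pair_eq]
        | inr a' => cases hba; simp [liftW, Sym2.map_pair_eq]
      have hP : ∃ P : G.Walk a c, walkWt w P = walkWt (liftW w) Pi2x ∧ z ∉ P.support := by
        refine ⟨(hba ▸ (Pi2x.map hom) : G.Walk a c), ?_, ?_⟩
        · cases hba; exact hwmap Pi2x
        · cases hba
          intro h
          change z ∈ (Pi2x.map hom).support at h
          rw [SimpleGraph.Walk.support_map] at h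
          obtain ⟨x, hx, hfx⟩ := List.mem_map.mp h
          cases x with
          | inl v =>
            have : v = z := hfx
            exact hinl (this ▸ hx)
          | inr v =>
            have : v = z := hfx
            exact hinr (this ▸ hx)
      obtain ⟨P, hwP, hzP⟩ := hP
      by_cases hac : a = c
      · -- contradiction with h₃
        exfalso
        have hza' : (M : ℝ) / 2 ^ (m+1) < (w s(z, a) : ℝ) := by
          cases b with
          | inl a' =>
            have hb' : a' = a := hba
            subst hb'
            subst hac
            rw [Sym2.eq_swap]
            exact hwcz
          | inr a' =>
            have hb' : a' = a := hba
            subst hb'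
            exact_mod_cast hza.2.2
        have hσle : walkWt w σ ≤ walkWt (liftW w) π₁ := by
          have h5 := shortest_le w hσ (π₁.map hom)
          exact h5.trans_eq (hwmap π₁)
        have hpow : (M : ℝ) / 2 ^ m = 2 * ((M : ℝ) / 2 ^ (m+1)) := by
          rw [pow_succ]
          field_simp
        simp only [Nat.add_sub_cancel] at h₃
        rw [hpow] at h₃
        have hc1 : ((walkWt (liftW w) π : ℕ) : ℝ) =
            (walkWt (liftW w) π₁ : ℝ) + (walkWt (liftW w) π₂ : ℝ) := by
          rw [hsplit]; push_cast; ring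
        have hc2 : ((walkWt (liftW w) π₂ : ℕ) : ℝ) =
            (w s(z, a) : ℝ) + (walkWt (liftW w) Pi2x : ℝ) + (w s(c, z) : ℝ) := by
          rw [hπ₂w, hwb]; push_cast; ring
        have hσc : (walkWt w σ : ℝ) ≤ (walkWt (liftW w) π₁ : ℝ) := Nat.cast_le.mpr hσle
        have hnn' : (0 : ℝ) ≤ (walkWt (liftW w) Pi2x : ℝ) := Nat.cast_nonneg _
        linarith
      · obtain ⟨D, hD, hwD⟩ := cycle_aux w haG hGcz P hzP hac
        refine ⟨D, hD, ?_⟩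
        rw [hwP] at hwD
        have : walkWt w D ≤ walkWt (liftW w) π₂ := by
          rw [hπ₂w, hwb]; omega
        omega
  · -- π avoids z¹
    obtain ⟨bb, Pi0, hcc, hπeq⟩ := exists_concat π (by simp)
    cases bb with
    | inr c => exact (hcc : False).elim
    | inl c =>
      have hGcz : G.Adj c z := hcc.1
      have hpen : penult π = Sum.inl c := by rw [hπeq]; exact penult_concat _ _
      obtain ⟨cσ, σ', he, hσeq⟩ := exists_concat σ hyz
      have hpenσ : penult σ = cσ := by rw [hσeq]; exact penult_concat _ _
      have hccσ : c ≠ cσ := by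
        rw [hpen, hpenσ] at h₂
        simpa using h₂
      have hsup : π.support = Pi0.support ++ [Sum.inr z] := by
        rw [hπeq, SimpleGraph.Walk.support_concat]
      have hndπ := hπ.1.support_nodup
      rw [hsup] at hndπ
      have hinr : Sum.inr z ∉ Pi0.support :=
        fun h => (List.nodup_append'.mp hndπ).2.2 h (List.mem_singleton_self _)
      have hinl : Sum.inl z ∉ Pi0.support :=
        fun h => hz (hsup ▸ List.mem_append.mpr (Or.inl h))
      have hzQ : z ∉ (Pi0.map hom).support := by
        intro h
        rw [SimpleGraph.Walk.support_map] at h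
        obtain ⟨x, hx, hfx⟩ := List.mem_map.mp h
        cases x with
        | inl v =>
          have : v = z := hfx
          exact hinl (this ▸ hx)
        | inr v =>
          have : v = z := hfx
          exact hinr (this ▸ hx)
      have hndσ := hσ.1.support_nodup
      have hsupσ : σ.support = σ'.support ++ [z] := by
        rw [hσeq, SimpleGraph.Walk.support_concat]
      rw [hsupσ] at hndσ
      have hzσ' : z ∉ σ'.support :=
        fun h => (List.nodup_append'.mp hndσ).2.2 h (List.mem_singleton_self _)
      have hzP : z ∉ ((Pi0.map hom).reverse.append σ').support := by
        intro h
        rcases (SimpleGraph.Walk.mem_support_append_iff _ _).mp h with h | h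
        · rw [SimpleGraph.Walk.support_reverse, List.mem_reverse] at h
          exact hzQ h
        · exact hzσ' h
      obtain ⟨D, hD, hwD⟩ := cycle_aux w hGcz.symm he ((Pi0.map hom).reverse.append σ') hzP hccσ
      refine ⟨D, hD, ?_⟩
      have hwQ : walkWt w (Pi0.map hom) = walkWt (liftW w) Pi0 := hwmap Pi0
      have hwπ : walkWt (liftW w) π = walkWt (liftW w) Pi0 + w s(c, z) := by
        rw [hπeq, walkWt_concat]
        congr 1
      have hwσ : walkWt w σ = walkWt w σ' + w s(cσ, z) := by
        rw [hσeq, walkWt_concat]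
      have hwP : walkWt w ((Pi0.map hom).reverse.append σ') =
          walkWt (liftW w) Pi0 + walkWt w σ' := by
        erw [walkWt_append, walkWt_reverse, hwQ]
        rfl
      have hzc : w s(z, c) = w s(c, z) := by rw [Sym2.eq_swap]
      erw [hwP] at hwD
      omega



end Stmt3
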